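/- Let K be an N×N real symmetric positive definite matrix. Define D : (0, ∞) → ℝ by D(α) := (1/N) · tr( (1/2)((K² + αK)^{1/2} − K) ). Then D is continuous and strictly increasing on (0, ∞), D(α) → 0 as α → 0⁺, and D(α) → ∞ as α → ∞. Consequently, for every real d > 0 there exists a unique α > 0 with D(α) = d. -/

import Mathlib

open Matrix Classical

/-- The positive semidefinite square root of a matrix (junk value `0` if the matrix is not
positive semidefinite). -/
noncomputable def matSqrt {N : ℕ} (A : Matrix (Fin N) (Fin N) ℝ) : Matrix (Fin N) (Fin N) ℝ :=
  if h : A.PosSemidef then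
    (h.1.eigenvectorUnitary : Matrix (Fin N) (Fin N) ℝ) *
      diagonal ((↑) ∘ (h.1.eigenvalues · |>.sqrt)) *
      (star h.1.eigenvectorUnitary : Matrix (Fin N) (Fin N) ℝ)
  else 0

/-- The optimal distortion covariance matrix
`K_{Z*}(K, α) = (1/2)((K² + αK)^{1/2} − K)`. -/
noncomputable def Kzstar {N : ℕ} (K : Matrix (Fin N) (Fin N) ℝ) (α : ℝ) :
    Matrix (Fin N) (Fin N) ℝ :=
  (1 / 2 : ℝ) • (matSqrt (K ^ 2 + α • K) - K)

lemma trace_matSqrt_aux {N : ℕ} (K : Matrix (Fin N) (Fin N) ℝ) (hK : K.PosDef)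
    (α : ℝ) (hα : 0 ≤ α) :
    (matSqrt (K ^ 2 + α • K)).trace
      = ∑ i, Real.sqrt ((hK.1.eigenvalues i) ^ 2 + α * hK.1.eigenvalues i) := by
  classical
  set U : Matrix (Fin N) (Fin N) ℝ := (hK.1.eigenvectorUnitary : Matrix (Fin N) (Fin N) ℝ)
    with hUdef
  set lam := hK.1.eigenvalues with hlam
  have hmem := hK.1.eigenvectorUnitary.2
  have hUU : star U * U = 1 := by
    simpa [hUdef] using (Matrix.mem_unitaryGroup_iff').mp hmem
  have hUU' : U * star U = 1 := by
    simpa [hUdef] using (Matrix.mem_unitaryGroup_iff).mp hmem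
  have hspec : K = U * diagonal lam * star U := by
    have h := hK.1.spectral_theorem
    have : (RCLike.ofReal ∘ lam : Fin N → ℝ) = lam := by
      funext i; simp [RCLike.ofReal_real_eq_id]
    rw [this] at h
    exact h
  set D : Matrix (Fin N) (Fin N) ℝ :=
    diagonal (fun i => Real.sqrt ((lam i) ^ 2 + α * lam i)) with hD
  set B : Matrix (Fin N) (Fin N) ℝ := U * D * star U with hBdef
  have hlampos : ∀ i, 0 < lam i := fun i => hK.eigenvalues_pos i
  have hval_nonneg : ∀ i, 0 ≤ (lam i) ^ 2 + α * lam i := fun i =>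
    add_nonneg (sq_nonneg _) (mul_nonneg hα (hlampos i).le)
  have hDD : D * D = diagonal (fun i => (lam i) ^ 2 + α * lam i) := by
    rw [hD, diagonal_mul_diagonal]
    exact congrArg diagonal (funext fun i => Real.mul_self_sqrt (hval_nonneg i))
  have hKspec2 : K ^ 2 + α • K = U * diagonal (fun i => (lam i) ^ 2 + α * lam i) * star U := by
    have h1 : K ^ 2 = U * (diagonal lam * diagonal lam) * star U := by
      rw [pow_two, hspec]
      simp only [Matrix.mul_assoc]
      rw [← Matrix.mul_assoc (star U) U, hUU, Matrix.one_mul]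
    have h2 : α • K = U * (α • diagonal lam) * star U := by
      rw [hspec]
      simp [Matrix.mul_smul, Matrix.smul_mul]
    rw [h1, h2, ← Matrix.add_mul, ← Matrix.mul_add, diagonal_mul_diagonal]
    congr 2
    ext i j
    rcases eq_or_ne i j with rfl | hij
    · simp only [Matrix.add_apply, Matrix.smul_apply, Matrix.diagonal_apply_eq, smul_eq_mul]
      ring
    · simp [Matrix.diagonal_apply_ne _ hij, Matrix.add_apply, Matrix.smul_apply]
  have hB2 : B ^ 2 = K ^ 2 + α • K := by
    rw [pow_two, hBdef]
    simp only [Matrix.mul_assoc]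
    rw [← Matrix.mul_assoc (star U) U, hUU, Matrix.one_mul, hKspec2,
      ← Matrix.mul_assoc D D (star U), hDD, Matrix.mul_assoc]
  have hBpsd : B.PosSemidef := by
    have hDpsd : D.PosSemidef := posSemidef_diagonal_iff.mpr fun i => Real.sqrt_nonneg _
    have := hDpsd.mul_mul_conjTranspose_same U
    simpa [hBdef, Matrix.star_eq_conjTranspose, Matrix.mul_assoc] using this
  have hApsd : (K ^ 2 + α • K).PosSemidef := hB2 ▸ hBpsd.pow 2
  have hsqrt_eq : matSqrt (K ^ 2 + α • K) = B := by
    rw [matSqrt, dif_pos hApsd]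
    have e := hApsd.1.cfc_eq Real.sqrt
    rw [Matrix.IsHermitian.cfc, Unitary.conjStarAlgAut_apply] at e
    refine (e.symm.trans ?_ : _)
    rw [← hB2, ← cfc_comp_pow (hf := Real.continuous_sqrt.continuousOn) (ha := hBpsd.1.isSelfAdjoint)]
    conv_rhs => rw [← cfc_id' ℝ B (ha := hBpsd.1.isSelfAdjoint)]
    apply cfc_congr
    intro x hx
    rw [hBpsd.1.spectrum_real_eq_range_eigenvalues] at hx
    obtain ⟨i, rfl⟩ := hx
    exact Real.sqrt_sq (hBpsd.eigenvalues_nonneg i)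
  rw [hsqrt_eq, hBdef, Matrix.trace_mul_cycle, hUU, Matrix.one_mul, hD,
    Matrix.trace_diagonal]

lemma trace_K_aux {N : ℕ} (K : Matrix (Fin N) (Fin N) ℝ) (hK : K.PosDef) :
    K.trace = ∑ i, hK.1.eigenvalues i := by
  classical
  set U : Matrix (Fin N) (Fin N) ℝ := (hK.1.eigenvectorUnitary : Matrix (Fin N) (Fin N) ℝ)
  have hUU : star U * U = 1 :=
    (Matrix.mem_unitaryGroup_iff').mp hK.1.eigenvectorUnitary.2
  have hspec : K = U * diagonal hK.1.eigenvalues * star U := by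
    have h := hK.1.spectral_theorem
    have : (RCLike.ofReal ∘ hK.1.eigenvalues : Fin N → ℝ) = hK.1.eigenvalues := by
      funext i; simp [RCLike.ofReal_real_eq_id]
    rw [this] at h
    exact h
  conv_lhs => rw [hspec]
  rw [Matrix.trace_mul_cycle, hUU, Matrix.one_mul, Matrix.trace_diagonal]

theorem stmt_12 {N : ℕ} (hN : 0 < N) (K : Matrix (Fin N) (Fin N) ℝ) (hK : K.PosDef) :
    ContinuousOn (fun α : ℝ => ((N : ℝ))⁻¹ * Matrix.trace (Kzstar K α)) (Set.Ioi 0) ∧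
    StrictMonoOn (fun α : ℝ => ((N : ℝ))⁻¹ * Matrix.trace (Kzstar K α)) (Set.Ioi 0) ∧
    Filter.Tendsto (fun α : ℝ => ((N : ℝ))⁻¹ * Matrix.trace (Kzstar K α))
      (nhdsWithin 0 (Set.Ioi 0)) (nhds 0) ∧
    Filter.Tendsto (fun α : ℝ => ((N : ℝ))⁻¹ * Matrix.trace (Kzstar K α))
      Filter.atTop Filter.atTop ∧
    ∀ d : ℝ, 0 < d → ∃! α : ℝ, 0 < α ∧ ((N : ℝ))⁻¹ * Matrix.trace (Kzstar K α) = d := by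
  classical
  set lam := hK.1.eigenvalues with hlam
  have hlampos : ∀ i, 0 < lam i := fun i => hK.eigenvalues_pos i
  set F : ℝ → ℝ := fun α => ((N : ℝ))⁻¹ * Matrix.trace (Kzstar K α) with hF
  set g : ℝ → ℝ := fun α =>
    ((N : ℝ))⁻¹ * ((1 / 2) * ((∑ i, Real.sqrt ((lam i) ^ 2 + α * lam i)) - ∑ i, lam i)) with hg
  have hFg : ∀ α : ℝ, 0 ≤ α → F α = g α := by
    intro α hα
    rw [hF, hg]
    simp only [Kzstar, Matrix.trace_smul, Matrix.trace_sub, smul_eq_mul]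
    rw [trace_matSqrt_aux K hK α hα, trace_K_aux K hK]
  have hNpos : (0 : ℝ) < (N : ℝ) := by exact_mod_cast hN
  -- continuity of g
  have hgcont : Continuous g := by
    apply continuous_const.mul
    apply continuous_const.mul
    apply Continuous.sub _ continuous_const
    apply continuous_finset_sum
    intro i _
    exact Real.continuous_sqrt.comp (by continuity)
  -- g 0 = 0
  have hg0 : g 0 = 0 := by
    rw [hg]
    simp only [zero_mul, add_zero]
    have : ∀ i ∈ Finset.univ, Real.sqrt ((lam i) ^ 2) = lam i := fun i _ =>
      Real.sqrt_sq (hlampos i).le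
    rw [Finset.sum_congr rfl this]
    simp
  -- strict monotonicity helper
  have hmono : ∀ a b : ℝ, 0 ≤ a → a < b → g a < g b := by
    intro a b ha hab
    rw [hg]
    apply mul_lt_mul_of_pos_left _ (inv_pos.mpr hNpos)
    apply mul_lt_mul_of_pos_left _ (by norm_num : (0:ℝ) < 1/2)
    apply sub_lt_sub_right
    have hne : (Finset.univ : Finset (Fin N)).Nonempty := ⟨⟨0, hN⟩, Finset.mem_univ _⟩
    apply Finset.sum_lt_sum_of_nonempty hne
    intro i _
    apply Real.sqrt_lt_sqrt (add_nonneg (sq_nonneg _) (mul_nonneg ha (hlampos i).le))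
    exact add_lt_add_right (mul_lt_mul_of_pos_right hab (hlampos i)) _
  have hFg' : ∀ α ∈ Set.Ioi (0:ℝ), F α = g α := fun α hα => hFg α (le_of_lt hα)
  have hgtop : Filter.Tendsto g Filter.atTop Filter.atTop := by
    set i0 : Fin N := ⟨0, hN⟩
    set c : ℝ := ((N : ℝ))⁻¹ * (1/2) with hc
    have hcpos : 0 < c := by positivity
    set T : ℝ := ∑ i, lam i with hT
    have hsqrt_atTop : Filter.Tendsto Real.sqrt Filter.atTop Filter.atTop := by
      apply Filter.tendsto_atTop.2
      intro b
      filter_upwards [Filter.eventually_ge_atTop (b ^ 2)] with x hx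
      calc b ≤ |b| := le_abs_self b
        _ = Real.sqrt (b ^ 2) := (Real.sqrt_sq_eq_abs b).symm
        _ ≤ Real.sqrt x := Real.sqrt_le_sqrt hx
    have hlb : Filter.Tendsto (fun α : ℝ => c * (Real.sqrt (α * lam i0) - T))
        Filter.atTop Filter.atTop := by
      apply Filter.Tendsto.const_mul_atTop hcpos
      apply Filter.tendsto_atTop_add_const_right
      exact hsqrt_atTop.comp (Filter.tendsto_id.atTop_mul_const (hlampos i0))
    apply Filter.tendsto_atTop_mono' _ _ hlb
    filter_upwards [Filter.eventually_ge_atTop (0:ℝ)] with α hα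
    rw [hg]
    have hstep1 : Real.sqrt (α * lam i0) ≤ Real.sqrt ((lam i0) ^ 2 + α * lam i0) :=
      Real.sqrt_le_sqrt (le_add_of_nonneg_left (sq_nonneg _))
    have hstep2 : Real.sqrt ((lam i0) ^ 2 + α * lam i0)
        ≤ ∑ i, Real.sqrt ((lam i) ^ 2 + α * lam i) :=
      Finset.single_le_sum (f := fun i => Real.sqrt ((lam i) ^ 2 + α * lam i))
        (fun i _ => Real.sqrt_nonneg _) (Finset.mem_univ i0)
    calc c * (Real.sqrt (α * lam i0) - T)
        ≤ c * ((∑ i, Real.sqrt ((lam i) ^ 2 + α * lam i)) - T) := by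
          apply mul_le_mul_of_nonneg_left _ hcpos.le
          exact sub_le_sub_right (hstep1.trans hstep2) T
      _ = ((N : ℝ))⁻¹ * ((1/2) * ((∑ i, Real.sqrt ((lam i) ^ 2 + α * lam i)) - T)) := by
          rw [hc]; ring
  refine ⟨?_, ?_, ?_, ?_, ?_⟩
  · exact (hgcont.continuousOn).congr hFg'
  · intro a ha b hb hab
    rw [hFg' a ha, hFg' b hb]
    exact hmono a b (le_of_lt ha) hab
  · have h1 : Filter.Tendsto g (nhdsWithin 0 (Set.Ioi 0)) (nhds 0) := by
      have h2 := hgcont.tendsto 0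
      rw [hg0] at h2
      exact h2.mono_left nhdsWithin_le_nhds
    apply h1.congr'
    filter_upwards [self_mem_nhdsWithin] with α hα
    exact (hFg' α hα).symm
  · apply hgtop.congr'
    filter_upwards [Filter.eventually_gt_atTop (0:ℝ)] with α hα
    exact (hFg α hα.le).symm
  · intro d hd
    -- find A with g A > d
    obtain ⟨A, hA0, hAd⟩ : ∃ A : ℝ, 0 < A ∧ d < g A := by
      have := (hgtop.eventually (Filter.eventually_gt_atTop d)).and
        (Filter.eventually_gt_atTop (0:ℝ))
      obtain ⟨A, hA1, hA2⟩ := this.exists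
      exact ⟨A, hA2, hA1⟩
    have hIVT : d ∈ g '' Set.Ioo 0 A := by
      apply intermediate_value_Ioo hA0.le (hgcont.continuousOn)
      rw [hg0]
      exact ⟨hd, hAd⟩
    obtain ⟨α, hαmem, hαd⟩ := hIVT
    refine ⟨α, ⟨hαmem.1, (hFg α hαmem.1.le).trans hαd⟩, ?_⟩
    rintro y ⟨hy0, hyd⟩
    replace hyd : g y = d := (hFg y hy0.le).symm.trans hyd
    by_contra hne
    rcases lt_or_gt_of_ne hne with h | h
    · have := hmono y α hy0.le h
      rw [hyd, hαd] at this
      exact lt_irrefl d this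
    · have := hmono α y hαmem.1.le h
      rw [hyd, hαd] at this
      exact lt_irrefl d this
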